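/- arXiv:2605.18106 — 4 statements merged into one kernel-verified Lean document; each statement's English description precedes it below -/
import Mathlib

section
/- Let e, d be positive integers, 𝟙 ∈ ℝ^e the all-ones vector, and Π := I_e − (1/e)𝟙𝟙ᵀ. Let Ψ be a map from e×e real matrices to e×e real matrices such that (a) Ψ(P X Pᵀ) = P Ψ(X) Pᵀ for every symmetric positive semidefinite X and every e×e permutation matrix P, and (b) for every symmetric positive semidefinite X and every w ∈ ℝ^e with 𝟙ᵀw = 0, one has 𝟙ᵀ(Ψ(X) w) = 0. Define, for an e×d real matrix D, D_c := Π D and 𝒰(D) := Ψ(D_c D_cᵀ) · D_c. Then for every e×d real matrix D, every e×e permutation matrix P, and every a ∈ ℝ^d: 𝒰(P D + 𝟙 aᵀ) = P · 𝒰(D), and 𝟙ᵀ 𝒰(D) = 0 (every column sum of 𝒰(D) is zero). -/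
open Matrix

section Aux

variable {e : ℕ}

lemma perm_mul_transpose_self (σ : Equiv.Perm (Fin e)) :
    σ.permMatrix ℝ * (σ.permMatrix ℝ)ᵀ = 1 := by
  rw [← PEquiv.toMatrix_symm, ← Equiv.toPEquiv_symm, ← PEquiv.toMatrix_trans,
    ← Equiv.toPEquiv_trans]
  simp

lemma perm_transpose_mul_self (σ : Equiv.Perm (Fin e)) :
    (σ.permMatrix ℝ)ᵀ * σ.permMatrix ℝ = 1 := by
  rw [← PEquiv.toMatrix_symm, ← Equiv.toPEquiv_symm, ← PEquiv.toMatrix_trans,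
    ← Equiv.toPEquiv_trans]
  simp

lemma perm_mul_J (σ : Equiv.Perm (Fin e)) :
    σ.permMatrix ℝ * vecMulVec (fun _ => (1 : ℝ)) (fun _ => (1 : ℝ))
      = vecMulVec (fun _ => (1 : ℝ)) (fun _ => (1 : ℝ)) := by
  rw [Equiv.Perm.permMatrix, PEquiv.toMatrix_toPEquiv_mul]
  ext i j
  simp [vecMulVec]

lemma J_mul_perm (σ : Equiv.Perm (Fin e)) :
    vecMulVec (fun _ => (1 : ℝ)) (fun _ => (1 : ℝ)) * σ.permMatrix ℝ
      = vecMulVec (fun _ => (1 : ℝ)) (fun _ => (1 : ℝ)) := by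
  rw [Equiv.Perm.permMatrix, PEquiv.mul_toMatrix_toPEquiv]
  ext i j
  simp [vecMulVec]

end Aux

/-- Router-compatibility of the centered left-spectral update.
Let `Π = I − (1/e) 𝟙𝟙ᵀ` and `𝒰(D) = Ψ(D_c D_cᵀ) D_c` with `D_c = Π D`, where `Ψ`
is permutation equivariant on PSD matrices and preserves the centered subspace.
Then `𝒰(P D + 𝟙 aᵀ) = P 𝒰(D)` and `𝟙ᵀ 𝒰(D) = 0` (all column sums vanish). -/
theorem centered_left_spectral_router_compatible
    {e d : ℕ} (he : 0 < e) (hd : 0 < d)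
    (Ψ : Matrix (Fin e) (Fin e) ℝ → Matrix (Fin e) (Fin e) ℝ)
    -- (a) permutation equivariance of `Ψ` on positive semidefinite matrices
    (hΨperm : ∀ X : Matrix (Fin e) (Fin e) ℝ, X.PosSemidef →
      ∀ P : Matrix (Fin e) (Fin e) ℝ, (∃ σ : Equiv.Perm (Fin e), P = σ.permMatrix ℝ) →
        Ψ (P * X * Pᵀ) = P * Ψ X * Pᵀ)
    -- (b) `Ψ(X)` maps the centered subspace `{w : 𝟙ᵀw = 0}` to itself
    (hΨcenter : ∀ X : Matrix (Fin e) (Fin e) ℝ, X.PosSemidef →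
      ∀ w : Fin e → ℝ, (∑ i, w i) = 0 → (∑ i, (Ψ X *ᵥ w) i) = 0)
    -- `Π = I − (1/e) 𝟙𝟙ᵀ`
    (Proj : Matrix (Fin e) (Fin e) ℝ)
    (hProj : Proj = 1 - (e : ℝ)⁻¹ • vecMulVec (fun _ => (1 : ℝ)) (fun _ => (1 : ℝ)))
    -- `𝒰(D) = Ψ(D_c D_cᵀ) ⬝ D_c` with `D_c = Π D`
    (U : Matrix (Fin e) (Fin d) ℝ → Matrix (Fin e) (Fin d) ℝ)
    (hU : ∀ D, U D = Ψ ((Proj * D) * (Proj * D)ᵀ) * (Proj * D)) :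
    ∀ (D : Matrix (Fin e) (Fin d) ℝ) (P : Matrix (Fin e) (Fin e) ℝ) (a : Fin d → ℝ),
      (∃ σ : Equiv.Perm (Fin e), P = σ.permMatrix ℝ) →
      U (P * D + vecMulVec (fun _ => (1 : ℝ)) a) = P * U D ∧
      ∀ j : Fin d, (∑ i, U D i j) = 0 := by
  have he' : (e : ℝ) ≠ 0 := Nat.cast_ne_zero.mpr he.ne'
  intro D P a hP
  obtain ⟨σ, rfl⟩ := hP
  set P := σ.permMatrix ℝ with hPdef
  -- Π commutes with P
  have hcomm : Proj * P = P * Proj := by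
    rw [hProj, sub_mul, mul_sub, one_mul, mul_one, Matrix.smul_mul, Matrix.mul_smul,
      perm_mul_J, J_mul_perm]
  -- Π kills 𝟙 aᵀ
  have hkill : Proj * vecMulVec (fun _ : Fin e => (1 : ℝ)) a = (0 : Matrix (Fin e) (Fin d) ℝ) := by
    have hJ : vecMulVec (fun _ : Fin e => (1 : ℝ)) (fun _ : Fin e => (1 : ℝ))
        * vecMulVec (fun _ : Fin e => (1 : ℝ)) a
        = (e : ℝ) • vecMulVec (fun _ : Fin e => (1 : ℝ)) a := by
      ext i j
      simp [Matrix.mul_apply, vecMulVec_apply, mul_comm]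
    rw [hProj, Matrix.sub_mul, Matrix.one_mul, Matrix.smul_mul, hJ, smul_smul,
      inv_mul_cancel₀ he', one_smul, sub_self]
  -- column sums of Π * M vanish
  have hcolsum : ∀ (M : Matrix (Fin e) (Fin d) ℝ) (j : Fin d),
      (∑ i, (Proj * M) i j) = 0 := by
    intro M j
    rw [hProj]
    simp only [Matrix.sub_apply, Matrix.mul_apply, Matrix.smul_apply, vecMulVec_apply,
      smul_eq_mul, one_mul]
    rw [Finset.sum_comm]
    have hz : ∀ y : Fin e, (∑ x : Fin e,
        ((1 : Matrix (Fin e) (Fin e) ℝ) x y - (e : ℝ)⁻¹ * 1)) = 0 := by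
      intro y
      rw [Finset.sum_sub_distrib, Finset.sum_const, Finset.card_univ, Fintype.card_fin]
      simp [Matrix.one_apply, mul_one, nsmul_eq_mul, mul_inv_cancel₀ he']
    refine Finset.sum_eq_zero fun y _ => ?_
    rw [← Finset.sum_mul, hz y, zero_mul]
  -- the centered matrix transforms equivariantly
  have hcent : Proj * (P * D + vecMulVec (fun _ => (1 : ℝ)) a) = P * (Proj * D) := by
    rw [Matrix.mul_add, hkill, add_zero, ← Matrix.mul_assoc, hcomm, Matrix.mul_assoc]
  have hpsd : ((Proj * D) * (Proj * D)ᵀ).PosSemidef := by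
    have h := Matrix.posSemidef_self_mul_conjTranspose (Proj * D)
    rwa [Matrix.conjTranspose_eq_transpose_of_trivial] at h
  constructor
  · rw [hU, hU, hcent]
    have hGram : (P * (Proj * D)) * (P * (Proj * D))ᵀ
        = P * ((Proj * D) * (Proj * D)ᵀ) * Pᵀ := by
      rw [Matrix.transpose_mul]
      simp [Matrix.mul_assoc]
    rw [hGram, hΨperm _ hpsd P ⟨σ, rfl⟩]
    rw [Matrix.mul_assoc (P * Ψ ((Proj * D) * (Proj * D)ᵀ)) Pᵀ (P * (Proj * D)),
      ← Matrix.mul_assoc Pᵀ P (Proj * D), perm_transpose_mul_self, Matrix.one_mul,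
      Matrix.mul_assoc]
  · intro j
    rw [hU]
    have hw : (∑ i, (fun i => (Proj * D) i j) i) = 0 := hcolsum D j
    have := hΨcenter _ hpsd (fun i => (Proj * D) i j) hw
    have heq : ∀ i, (Ψ ((Proj * D) * (Proj * D)ᵀ) * (Proj * D)) i j
        = (Ψ ((Proj * D) * (Proj * D)ᵀ) *ᵥ fun i => (Proj * D) i j) i := by
      intro i
      simp [Matrix.mul_apply, Matrix.mulVec, dotProduct]
    rw [Finset.sum_congr rfl (fun i _ => heq i)]
    exact this
end

section
/- Let E be a real inner product space, f : E → ℝ, and G : E → E such that f has gradient G(x) at every x ∈ E and G is Lipschitz with constant L > 0. Let T : E → E and 0 < c₁ ≤ c₂ satisfy c₁‖g‖² ≤ ⟪g, T(g)⟫ and ‖T(g)‖² ≤ c₂‖g‖² for all g ∈ E. Then for every W ∈ E and every γ > 0, f(W − γ T(G(W))) ≤ f(W) − (c₁γ − (L c₂/2)γ²)‖G(W)‖². In particular, if 0 < γ < 2c₁/(Lc₂) then f(W − γ T(G(W))) ≤ f(W). -/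
open scoped RealInnerProductSpace

theorem descent_aux
    {E : Type*} [NormedAddCommGroup E] [InnerProductSpace ℝ E] [CompleteSpace E]
    (f : E → ℝ) (G : E → E) (L : ℝ) (hL : 0 < L)
    (hgrad : ∀ x, HasGradientAt f (G x) x)
    (hlip : ∀ x y, ‖G x - G y‖ ≤ L * ‖x - y‖) (x v : E) :
    f (x + v) ≤ f x + ⟪G x, v⟫ + L / 2 * ‖v‖ ^ 2 := by
  set φ : ℝ → ℝ := fun t => f (x + t • v) - t * ⟪G x, v⟫ - L / 2 * t ^ 2 * ‖v‖ ^ 2 with hφ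
  have hline : ∀ t : ℝ, HasDerivAt (fun t : ℝ => x + t • v) v t := by
    intro t
    simpa using ((hasDerivAt_id t).smul_const v).const_add x
  have hd : ∀ t : ℝ, HasDerivAt φ
      (⟪G (x + t • v), v⟫ - ⟪G x, v⟫ - L / 2 * (2 * t) * ‖v‖ ^ 2) t := by
    intro t
    have h1 : HasDerivAt (fun t : ℝ => f (x + t • v)) ⟪G (x + t • v), v⟫ t := by
      have := ((hgrad (x + t • v)).hasFDerivAt.comp t (hline t)).hasDerivAt
      simp at this
      exact this
    have h2 : HasDerivAt (fun t : ℝ => t * ⟪G x, v⟫) ⟪G x, v⟫ t := by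
      simpa using (hasDerivAt_id t).mul_const (⟪G x, v⟫)
    have h3 : HasDerivAt (fun t : ℝ => L / 2 * t ^ 2 * ‖v‖ ^ 2) (L / 2 * (2 * t) * ‖v‖ ^ 2) t := by
      have := ((hasDerivAt_pow 2 t).const_mul (L / 2)).mul_const (‖v‖ ^ 2)
      simpa [mul_comm, mul_assoc, mul_left_comm] using this
    exact (h1.sub h2).sub h3
  have hanti : AntitoneOn φ (Set.Icc 0 1) := by
    apply antitoneOn_of_deriv_nonpos (convex_Icc 0 1)
      (Continuous.continuousOn (continuous_iff_continuousAt.mpr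
        fun t => (hd t).differentiableAt.continuousAt))
    · intro t ht
      exact (hd t).differentiableAt.differentiableWithinAt
    · intro t ht
      rw [(hd t).deriv]
      have ht0 : (0:ℝ) ≤ t := le_of_lt (Set.mem_Ioo.mp (by simpa using ht)).1
      have hcs : ⟪G (x + t • v) - G x, v⟫ ≤ ‖G (x + t • v) - G x‖ * ‖v‖ :=
        real_inner_le_norm _ _
      have hl : ‖G (x + t • v) - G x‖ ≤ L * (t * ‖v‖) := by
        have := hlip (x + t • v) x
        simpa [norm_smul, abs_of_nonneg ht0, mul_assoc] using this
      have : ⟪G (x + t • v), v⟫ - ⟪G x, v⟫ ≤ L * t * ‖v‖ ^ 2 := by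
        rw [← inner_sub_left]
        calc ⟪G (x + t • v) - G x, v⟫ ≤ ‖G (x + t • v) - G x‖ * ‖v‖ := hcs
          _ ≤ L * (t * ‖v‖) * ‖v‖ := by
              exact mul_le_mul_of_nonneg_right hl (norm_nonneg v)
          _ = L * t * ‖v‖ ^ 2 := by ring
      nlinarith
  have := hanti (Set.left_mem_Icc.mpr zero_le_one) (Set.right_mem_Icc.mpr zero_le_one) zero_le_one
  simp only [hφ] at this
  simp only [one_smul, zero_smul, add_zero, one_pow, one_mul, zero_pow, mul_zero,
    zero_mul, sub_zero] at this
  linarith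

/-- Descent lemma for aligned, norm-controlled update maps:
if `f` has an `L`-Lipschitz gradient `G`, and `T` satisfies
`c₁‖g‖² ≤ ⟪g, T g⟫` and `‖T g‖² ≤ c₂‖g‖²`, then for every `W` and `γ > 0`,
`f(W − γ T(G W)) ≤ f(W) − (c₁γ − (Lc₂/2)γ²)‖G W‖²`; in particular the step is a
descent step whenever `0 < γ < 2c₁/(Lc₂)`. -/
theorem descent_lemma_spectral_optimizer
    {E : Type*} [NormedAddCommGroup E] [InnerProductSpace ℝ E] [CompleteSpace E]
    (f : E → ℝ) (G : E → E) (L : ℝ) (hL : 0 < L)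
    (hgrad : ∀ x, HasGradientAt f (G x) x)
    (hlip : ∀ x y, ‖G x - G y‖ ≤ L * ‖x - y‖)
    (T : E → E) (c₁ c₂ : ℝ) (hc₁ : 0 < c₁) (hc₁₂ : c₁ ≤ c₂)
    (halign : ∀ g : E, c₁ * ‖g‖ ^ 2 ≤ ⟪g, T g⟫)
    (hnorm : ∀ g : E, ‖T g‖ ^ 2 ≤ c₂ * ‖g‖ ^ 2) :
    ∀ (W : E) (γ : ℝ), 0 < γ →
      f (W - γ • T (G W)) ≤ f W - (c₁ * γ - L * c₂ / 2 * γ ^ 2) * ‖G W‖ ^ 2 ∧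
      (γ < 2 * c₁ / (L * c₂) → f (W - γ • T (G W)) ≤ f W) := by
  intro W γ hγ
  have hmain : f (W - γ • T (G W)) ≤ f W - (c₁ * γ - L * c₂ / 2 * γ ^ 2) * ‖G W‖ ^ 2 := by
    have key := descent_aux f G L hL hgrad hlip W (-(γ • T (G W)))
    have heq : W + -(γ • T (G W)) = W - γ • T (G W) := by abel
    rw [heq] at key
    have hinner : ⟪G W, -(γ • T (G W))⟫ = -(γ * ⟪G W, T (G W)⟫) := by
      rw [inner_neg_right, real_inner_smul_right]
    have hnorm2 : ‖-(γ • T (G W))‖ ^ 2 = γ ^ 2 * ‖T (G W)‖ ^ 2 := by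
      rw [norm_neg, norm_smul]
      simp [abs_of_pos hγ, mul_pow]
    have h1 : c₁ * ‖G W‖ ^ 2 ≤ ⟪G W, T (G W)⟫ := halign _
    have h2 : ‖T (G W)‖ ^ 2 ≤ c₂ * ‖G W‖ ^ 2 := hnorm _
    rw [hinner, hnorm2] at key
    nlinarith [mul_le_mul_of_nonneg_left h1 hγ.le,
      mul_le_mul_of_nonneg_left h2 (show (0:ℝ) ≤ L / 2 * γ ^ 2 by positivity)]
  refine ⟨hmain, fun hγ2 => ?_⟩
  have hc₂ : 0 < c₂ := lt_of_lt_of_le hc₁ hc₁₂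
  have hLc₂ : 0 < L * c₂ := mul_pos hL hc₂
  have : γ * (L * c₂) < 2 * c₁ := (lt_div_iff₀ hLc₂).mp hγ2
  have hcoef : 0 ≤ c₁ * γ - L * c₂ / 2 * γ ^ 2 := by nlinarith
  nlinarith [sq_nonneg ‖G W‖, hmain]
end

section
/- Let E be a real inner product space, f : E → ℝ, and G : E → E such that f has gradient G(x) at every x ∈ E and G is Lipschitz with constant L > 0. Assume the μ-Polyak–Łojasiewicz condition: there are μ > 0 and f⋆ ∈ ℝ with f⋆ ≤ f(x) and ‖G(x)‖² ≥ 2μ(f(x) − f⋆) for all x ∈ E. Let T : E → E and 0 < c₁ ≤ c₂ satisfy c₁‖g‖² ≤ ⟪g, T(g)⟫ and ‖T(g)‖² ≤ c₂‖g‖² for all g ∈ E. Then for every γ with 0 < γ < 2c₁/(Lc₂) and every W ∈ E, f(W − γ T(G(W))) − f⋆ ≤ (1 − 2μγ(c₁ − (Lc₂/2)γ)) · (f(W) − f⋆). -/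
open scoped RealInnerProductSpace

lemma descent_lemma
    {E : Type*} [NormedAddCommGroup E] [InnerProductSpace ℝ E] [CompleteSpace E]
    (f : E → ℝ) (G : E → E) (L : ℝ) (hL : 0 ≤ L)
    (hgrad : ∀ x, HasGradientAt f (G x) x)
    (hlip : ∀ x y, ‖G x - G y‖ ≤ L * ‖x - y‖)
    (x v : E) :
    f (x + v) ≤ f x + ⟪G x, v⟫ + L / 2 * ‖v‖ ^ 2 := by
  set φ : ℝ → ℝ := fun t => f x + t * ⟪G x, v⟫ + L / 2 * t ^ 2 * ‖v‖ ^ 2 - f (x + t • v)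
    with hφ
  have hder : ∀ t : ℝ, HasDerivAt φ
      (⟪G x, v⟫ + L * t * ‖v‖ ^ 2 - ⟪G (x + t • v), v⟫) t := by
    intro t
    have hc : HasDerivAt (fun t : ℝ => x + t • v) v t := by
      simpa using ((hasDerivAt_id t).smul_const v).const_add x
    have hf : HasDerivAt (fun t : ℝ => f (x + t • v)) ⟪G (x + t • v), v⟫ t := by
      have := (hgrad (x + t • v)).hasFDerivAt.comp_hasDerivAt t hc
      exact this
    have h1 : HasDerivAt (fun t : ℝ => f x + t * ⟪G x, v⟫ + L / 2 * t ^ 2 * ‖v‖ ^ 2)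
        (⟪G x, v⟫ + L * t * ‖v‖ ^ 2) t := by
      have ha : HasDerivAt (fun t : ℝ => t * ⟪G x, v⟫) ⟪G x, v⟫ t := by
        simpa using (hasDerivAt_id t).mul_const ⟪G x, v⟫
      have hb : HasDerivAt (fun t : ℝ => L / 2 * t ^ 2 * ‖v‖ ^ 2)
          (L * t * ‖v‖ ^ 2) t := by
        have h := ((hasDerivAt_pow 2 t).const_mul (L / 2)).mul_const (‖v‖ ^ 2)
        refine h.congr_deriv ?_
        push_cast; ring
      exact (ha.const_add (f x)).add hb
    exact h1.sub hf
  have hmono : MonotoneOn φ (Set.Icc 0 1) := by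
    apply monotoneOn_of_deriv_nonneg (convex_Icc 0 1)
    · exact (Differentiable.continuous (fun t => (hder t).differentiableAt)).continuousOn
    · intro t _
      exact (hder t).differentiableAt.differentiableWithinAt
    · intro t ht
      rw [(hder t).deriv]
      rw [interior_Icc] at ht
      have hbound : ⟪G (x + t • v), v⟫ - ⟪G x, v⟫ ≤ L * t * ‖v‖ ^ 2 := by
        have h1 : ⟪G (x + t • v) - G x, v⟫ ≤ ‖G (x + t • v) - G x‖ * ‖v‖ :=
          real_inner_le_norm _ _
        have h2 : ‖G (x + t • v) - G x‖ ≤ L * (t * ‖v‖) := by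
          have := hlip (x + t • v) x
          simpa [norm_smul, abs_of_pos ht.1] using this
        have h3 : ‖G (x + t • v) - G x‖ * ‖v‖ ≤ L * (t * ‖v‖) * ‖v‖ :=
          mul_le_mul_of_nonneg_right h2 (norm_nonneg v)
        calc ⟪G (x + t • v), v⟫ - ⟪G x, v⟫ = ⟪G (x + t • v) - G x, v⟫ := by
              rw [inner_sub_left]
          _ ≤ L * (t * ‖v‖) * ‖v‖ := h1.trans h3
          _ = L * t * ‖v‖ ^ 2 := by ring
      linarith
  have h01 : φ 0 ≤ φ 1 := hmono (by norm_num) (by norm_num) (by norm_num)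
  have h0 : φ 0 = 0 := by simp [hφ]
  have h1 : φ 1 = f x + ⟪G x, v⟫ + L / 2 * ‖v‖ ^ 2 - f (x + v) := by
    simp [hφ]
  rw [h0, h1] at h01
  linarith

/-- Linear convergence under the Polyak–Łojasiewicz condition:
if `f` has an `L`-Lipschitz gradient `G`, satisfies the `μ`-PL inequality
`‖G x‖² ≥ 2μ(f x − f⋆)` relative to a lower bound `f⋆`, and `T` satisfies
`c₁‖g‖² ≤ ⟪g, T g⟫` and `‖T g‖² ≤ c₂‖g‖²` with `0 < c₁ ≤ c₂`, then for every
step size `0 < γ < 2c₁/(Lc₂)` and every `W`,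
`f(W − γ T(G W)) − f⋆ ≤ (1 − 2μγ(c₁ − (Lc₂/2)γ))(f(W) − f⋆)`. -/
theorem linear_convergence_PL_spectral_optimizer
    {E : Type*} [NormedAddCommGroup E] [InnerProductSpace ℝ E] [CompleteSpace E]
    (f : E → ℝ) (G : E → E) (L : ℝ) (hL : 0 < L)
    (hgrad : ∀ x, HasGradientAt f (G x) x)
    (hlip : ∀ x y, ‖G x - G y‖ ≤ L * ‖x - y‖)
    (μ : ℝ) (hμ : 0 < μ) (fstar : ℝ) (hfstar : ∀ x, fstar ≤ f x)
    (hPL : ∀ x, ‖G x‖ ^ 2 ≥ 2 * μ * (f x - fstar))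
    (T : E → E) (c₁ c₂ : ℝ) (hc₁ : 0 < c₁) (hc₁₂ : c₁ ≤ c₂)
    (halign : ∀ g : E, c₁ * ‖g‖ ^ 2 ≤ ⟪g, T g⟫)
    (hnorm : ∀ g : E, ‖T g‖ ^ 2 ≤ c₂ * ‖g‖ ^ 2) :
    ∀ γ : ℝ, 0 < γ → γ < 2 * c₁ / (L * c₂) →
      ∀ W : E,
        f (W - γ • T (G W)) - fstar ≤
          (1 - 2 * μ * γ * (c₁ - L * c₂ / 2 * γ)) * (f W - fstar) := by
  intro γ hγ hγ2 W
  have hc₂ : 0 < c₂ := hc₁.trans_le hc₁₂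
  have hLc₂ : 0 < L * c₂ := mul_pos hL hc₂
  set v : E := -(γ • T (G W)) with hv
  have hdesc : f (W + v) ≤ f W + ⟪G W, v⟫ + L / 2 * ‖v‖ ^ 2 :=
    descent_lemma f G L hL.le hgrad hlip W v
  have hWv : W + v = W - γ • T (G W) := by rw [hv]; abel
  have hiv : ⟪G W, v⟫ = -(γ * ⟪G W, T (G W)⟫) := by
    rw [hv, inner_neg_right, real_inner_smul_right]
  have hnv : ‖v‖ ^ 2 = γ ^ 2 * ‖T (G W)‖ ^ 2 := by
    rw [hv, norm_neg, norm_smul]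
    rw [mul_pow, Real.norm_eq_abs, sq_abs]
  -- key inequality: f(W+v) ≤ f W - γ(c₁ - Lc₂γ/2)‖G W‖²
  have key : f (W + v) ≤ f W - γ * (c₁ - L * c₂ / 2 * γ) * ‖G W‖ ^ 2 := by
    have h1 : c₁ * ‖G W‖ ^ 2 ≤ ⟪G W, T (G W)⟫ := halign (G W)
    have h2 : ‖T (G W)‖ ^ 2 ≤ c₂ * ‖G W‖ ^ 2 := hnorm (G W)
    have h3 : ⟪G W, v⟫ ≤ -(γ * (c₁ * ‖G W‖ ^ 2)) := by
      rw [hiv]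
      have := mul_le_mul_of_nonneg_left h1 hγ.le
      linarith
    have h4 : L / 2 * ‖v‖ ^ 2 ≤ L / 2 * γ ^ 2 * (c₂ * ‖G W‖ ^ 2) := by
      rw [hnv]
      have : γ ^ 2 * ‖T (G W)‖ ^ 2 ≤ γ ^ 2 * (c₂ * ‖G W‖ ^ 2) :=
        mul_le_mul_of_nonneg_left h2 (sq_nonneg γ)
      nlinarith [hL.le]
    nlinarith
  have hcoef : 0 ≤ γ * (c₁ - L * c₂ / 2 * γ) := by
    apply mul_nonneg hγ.le
    have : L * c₂ * γ < 2 * c₁ := by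
      have := (lt_div_iff₀ hLc₂).mp hγ2
      linarith [this]
    nlinarith
  have hPLW := hPL W
  have h5 : γ * (c₁ - L * c₂ / 2 * γ) * (2 * μ * (f W - fstar)) ≤
      γ * (c₁ - L * c₂ / 2 * γ) * ‖G W‖ ^ 2 :=
    mul_le_mul_of_nonneg_left hPLW hcoef
  rw [hWv] at key
  nlinarith [key, h5]
end

section
/- Let f be a real-valued function on the space of m×n real matrices equipped with the Frobenius inner product ⟪A, B⟫_F = tr(AᵀB), such that f has gradient ∇f(W) at every W and ∇f is Lipschitz with constant L > 0 in the Frobenius norm. Assume the μ-Polyak–Łojasiewicz condition: there are μ > 0 and f⋆ ∈ ℝ with f⋆ ≤ f(W) and ‖∇f(W)‖_F² ≥ 2μ(f(W) − f⋆) for all W. Let W be an m×n real matrix with G := ∇f(W) such that GᵀG is positive definite, let S be the unique symmetric positive semidefinite square root of GᵀG, and set N := tr(S). Then for every γ with 0 < γ < 2/(L n), f(W − γ N G S⁻¹) − f⋆ ≤ (1 − 2μγ(1 − (Lγ/2) n)) · (f(W) − f⋆). -/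
open Matrix
open scoped RealInnerProductSpace

noncomputable section

/-- The Frobenius inner product `⟪A, B⟫_F = tr(AᵀB)` on `m×n` real matrices,
packaged as an `InnerProductSpace.Core`. -/
def frobeniusCore (m n : ℕ) :
    InnerProductSpace.Core ℝ (Matrix (Fin m) (Fin n) ℝ) where
  inner A B := (Aᵀ * B).trace
  conj_inner_symm := by
    intro x y
    have h : (yᵀ * x).trace = (xᵀ * y).trace := by
      rw [← Matrix.trace_transpose (yᵀ * x), Matrix.transpose_mul,
        Matrix.transpose_transpose]
    simpa using h
  re_inner_nonneg := by
    intro x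
    have h : (xᵀ * x).trace = ∑ j, ∑ i, x i j * x i j := by
      simp [Matrix.trace, Matrix.diag, Matrix.mul_apply]
    have h' : (0 : ℝ) ≤ (xᵀ * x).trace := by
      rw [h]
      exact Finset.sum_nonneg fun j _ => Finset.sum_nonneg fun i _ => mul_self_nonneg _
    simpa using h'
  add_left := by
    intro x y z
    simp [Matrix.transpose_add, Matrix.add_mul]
  smul_left := by
    intro x y r
    simp [Matrix.transpose_smul, Matrix.smul_mul]
  definite := by
    intro x hx
    have h : ∑ j, ∑ i, x i j * x i j = 0 := by
      have h' : (xᵀ * x).trace = ∑ j, ∑ i, x i j * x i j := by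
        simp [Matrix.trace, Matrix.diag, Matrix.mul_apply]
      rw [← h']
      simpa using hx
    ext i j
    have hj : ∀ j' ∈ Finset.univ, (0 : ℝ) ≤ ∑ i', x i' j' * x i' j' :=
      fun j' _ => Finset.sum_nonneg fun i' _ => mul_self_nonneg _
    have h3 : ∑ i', x i' j * x i' j = 0 :=
      (Finset.sum_eq_zero_iff_of_nonneg hj).mp h j (Finset.mem_univ j)
    have h4 : x i j * x i j = 0 :=
      (Finset.sum_eq_zero_iff_of_nonneg fun i' _ => mul_self_nonneg _).mp h3 i
        (Finset.mem_univ i)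
    simpa using mul_self_eq_zero.mp h4

/-- `m×n` real matrices as a normed group under the Frobenius norm. -/
instance (m n : ℕ) : NormedAddCommGroup (Matrix (Fin m) (Fin n) ℝ) :=
  (frobeniusCore m n).toNormedAddCommGroup

/-- `m×n` real matrices with the Frobenius inner product. -/
instance (m n : ℕ) : InnerProductSpace ℝ (Matrix (Fin m) (Fin n) ℝ) :=
  InnerProductSpace.ofCore (frobeniusCore m n).toCore

instance (m n : ℕ) : CompleteSpace (Matrix (Fin m) (Fin n) ℝ) :=
  FiniteDimensional.complete ℝ _


-- aux lemmas (to be placed above the theorem)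
section AuxLemmas

open intervalIntegral in
lemma frob_descent_lemma {E : Type*} [NormedAddCommGroup E] [InnerProductSpace ℝ E]
    [CompleteSpace E]
    (f : E → ℝ) (gradf : E → E) (L : ℝ) (hL : 0 ≤ L)
    (hgrad : ∀ x, HasGradientAt f (gradf x) x)
    (hlip : ∀ X Y, ‖gradf X - gradf Y‖ ≤ L * ‖X - Y‖)
    (x y : E) :
    f y ≤ f x + (inner ℝ (gradf x) (y - x) : ℝ) + L / 2 * ‖y - x‖ ^ 2 := by
  set d := y - x with hd
  set φ : ℝ → ℝ := fun t => (inner ℝ (gradf (x + t • d)) d : ℝ) with hφ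
  have hderiv : ∀ t : ℝ, HasDerivAt (fun t : ℝ => f (x + t • d)) (φ t) t := by
    intro t
    have h1 : HasDerivAt (fun t : ℝ => x + t • d) d t := by
      simpa using ((hasDerivAt_id t).smul_const d).const_add x
    have h2 := (hgrad (x + t • d)).hasFDerivAt
    have := h2.comp_hasDerivAt t h1
    simp only [InnerProductSpace.toDual_apply_apply] at this
    exact this
  have hcontg : Continuous gradf := by
    have : LipschitzWith (Real.toNNReal L) gradf := by
      apply LipschitzWith.of_dist_le_mul
      intro a b
      simpa [dist_eq_norm, Real.coe_toNNReal L hL] using hlip a b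
    exact this.continuous
  have hcontφ : Continuous φ := by
    apply Continuous.inner
    · exact hcontg.comp (by continuity)
    · exact continuous_const
  have hint : ∫ t in (0:ℝ)..1, φ t = f (x + (1:ℝ) • d) - f (x + (0:ℝ) • d) :=
    intervalIntegral.integral_eq_sub_of_hasDerivAt (f := fun t => f (x + t • d))
      (fun t _ => hderiv t) (hcontφ.intervalIntegrable 0 1)
  have hbound : ∫ t in (0:ℝ)..1, φ t ≤ ∫ t in (0:ℝ)..1, (φ 0 + L * t * ‖d‖ ^ 2) := by
    apply intervalIntegral.integral_mono_on (by norm_num)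
      (hcontφ.intervalIntegrable 0 1) (by apply Continuous.intervalIntegrable; continuity)
    intro t ht
    have h1 : φ t - φ 0 = (inner ℝ (gradf (x + t • d) - gradf x) d : ℝ) := by
      simp [φ, inner_sub_left]
    have h2 : (inner ℝ (gradf (x + t • d) - gradf x) d : ℝ) ≤
        ‖gradf (x + t • d) - gradf x‖ * ‖d‖ :=
      real_inner_le_norm _ _
    have h3 : ‖gradf (x + t • d) - gradf x‖ ≤ L * (t * ‖d‖) := by
      have := hlip (x + t • d) x
      simpa [norm_smul, abs_of_nonneg ht.1, mul_assoc] using this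
    nlinarith [norm_nonneg d, ht.1]
  have heq : (fun t : ℝ => L * t * ‖d‖ ^ 2) = fun t : ℝ => (L * ‖d‖ ^ 2) * t := by
    funext t; ring
  have hval : ∫ t in (0:ℝ)..1, (φ 0 + L * t * ‖d‖ ^ 2) = φ 0 + L / 2 * ‖d‖ ^ 2 := by
    rw [intervalIntegral.integral_add (intervalIntegrable_const)
      (by apply Continuous.intervalIntegrable; continuity),
      intervalIntegral.integral_const, heq, intervalIntegral.integral_const_mul,
      integral_id]
    norm_num
    ring
  have hφ0 : φ 0 = (inner ℝ (gradf x) d : ℝ) := by simp [φ]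
  have : f (x + (1:ℝ) • d) - f (x + (0:ℝ) • d) ≤ φ 0 + L / 2 * ‖d‖ ^ 2 := by
    rw [← hint, ← hval]; exact hbound
  simp only [one_smul, zero_smul, add_zero, hφ0, hd] at this
  have hxy : x + (y - x) = y := by abel
  rw [hxy] at this
  linarith

lemma frob_trace_facts {k : ℕ} (S : Matrix (Fin k) (Fin k) ℝ) (hS : S.PosSemidef) :
    (S * S).trace ≤ S.trace ^ 2 ∧ 0 ≤ S.trace := by
  have hH : S.IsHermitian := hS.1
  set U : Matrix (Fin k) (Fin k) ℝ := (hH.eigenvectorUnitary : Matrix (Fin k) (Fin k) ℝ)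
    with hU
  set D : Matrix (Fin k) (Fin k) ℝ := diagonal (RCLike.ofReal ∘ hH.eigenvalues) with hD
  have hUU : star U * U = 1 := ((Unitary.mem_iff).mp hH.eigenvectorUnitary.2).1
  have hspec : S = U * D * star U := hH.spectral_theorem
  have htr : S.trace = ∑ i, hH.eigenvalues i := by
    have h1 := congrArg trace hspec
    rw [trace_mul_comm, ← mul_assoc, hUU, one_mul, hD] at h1
    simpa [trace_diagonal] using h1
  have htr2 : (S * S).trace = ∑ i, hH.eigenvalues i ^ 2 := by
    have : S * S = U * (D * D) * star U := by
      rw [hspec]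
      rw [show U * D * star U * (U * D * star U) = U * D * (star U * U) * D * star U by
        simp only [mul_assoc]]
      rw [hUU, mul_one]
      simp only [mul_assoc]
    have h1 := congrArg trace this
    rw [trace_mul_comm (U * (D * D)) (star U), ← mul_assoc, hUU, one_mul, hD] at h1
    simpa [trace_diagonal, diagonal_mul_diagonal, pow_two] using h1
  constructor
  · rw [htr, htr2]
    exact Finset.sum_sq_le_sq_sum_of_nonneg (fun i _ => hS.eigenvalues_nonneg i)
  · rw [htr]
    exact Finset.sum_nonneg (fun i _ => hS.eigenvalues_nonneg i)

end AuxLemmas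


set_option maxHeartbeats 1000000 in
/-- Linear convergence of the nuclear-norm-scaled polar update
under the Polyak–Łojasiewicz condition: if `f` has an `L`-Lipschitz Frobenius
gradient, satisfies the `μ`-PL inequality relative to a lower bound `f⋆`,
`G = ∇f(W)` has `GᵀG` positive definite with unique symmetric psd square root
`S`, and `N = tr S`, then for every step size `0 < γ < 2/(Ln)`,
`f(W − γ N G S⁻¹) − f⋆ ≤ (1 − 2μγ(1 − (Lγ/2)n))(f(W) − f⋆)`. -/
theorem linear_convergence_PL_nuclear_scaled_polargrad
    {m n : ℕ} (f : Matrix (Fin m) (Fin n) ℝ → ℝ)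
    (gradf : Matrix (Fin m) (Fin n) ℝ → Matrix (Fin m) (Fin n) ℝ)
    (L : ℝ) (hL : 0 < L)
    (hgrad : ∀ W, HasGradientAt f (gradf W) W)
    (hlip : ∀ X Y, ‖gradf X - gradf Y‖ ≤ L * ‖X - Y‖)
    (μ : ℝ) (hμ : 0 < μ) (fstar : ℝ) (hfstar : ∀ X, fstar ≤ f X)
    (hPL : ∀ X, ‖gradf X‖ ^ 2 ≥ 2 * μ * (f X - fstar))
    (W G : Matrix (Fin m) (Fin n) ℝ) (hG : G = gradf W)
    (hpd : (Gᵀ * G).PosDef)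
    (S : Matrix (Fin n) (Fin n) ℝ) (hS : S.PosSemidef) (hSsq : S * S = Gᵀ * G)
    (N : ℝ) (hN : N = S.trace) :
    ∀ γ : ℝ, 0 < γ → γ < 2 / (L * (n : ℝ)) →
      f (W - (γ * N) • (G * S⁻¹)) - fstar ≤
        (1 - 2 * μ * γ * (1 - L * γ / 2 * (n : ℝ))) * (f W - fstar) := by
  intro γ hγ1 hγ2
  -- dispose of the degenerate case n = 0
  rcases Nat.eq_zero_or_pos n with hn0 | hn
  · exfalso
    rw [hn0] at hγ2
    norm_num at hγ2
    linarith
  have hnpos : (0 : ℝ) < (n : ℝ) := by exact_mod_cast hn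
  -- S is invertible
  have hdet : IsUnit S.det := by
    have h1 : S.det * S.det = (Gᵀ * G).det := by rw [← det_mul, hSsq]
    have h2 : 0 < (Gᵀ * G).det := hpd.det_pos
    have : S.det ≠ 0 := by
      intro h; rw [h] at h1; simp at h1; linarith
    exact isUnit_iff_ne_zero.mpr this
  have hSt : Sᵀ = S := by
    have := hS.1
    rwa [Matrix.IsHermitian, conjTranspose_eq_transpose_of_trivial] at this
  -- key matrix identities
  have hA : Gᵀ * (G * S⁻¹) = S := by
    rw [← Matrix.mul_assoc, ← hSsq, Matrix.mul_assoc, mul_nonsing_inv S hdet, mul_one]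
  have hB : (G * S⁻¹)ᵀ * (G * S⁻¹) = 1 := by
    rw [transpose_mul, transpose_nonsing_inv, hSt, Matrix.mul_assoc, hA, nonsing_inv_mul S hdet]
  -- inner products / norms
  have inner_eq : ∀ A B : Matrix (Fin m) (Fin n) ℝ, (inner ℝ A B : ℝ) = (Aᵀ * B).trace :=
    fun _ _ => rfl
  have norm_sq : ∀ A : Matrix (Fin m) (Fin n) ℝ, ‖A‖ ^ 2 = (Aᵀ * A).trace := by
    intro A
    rw [← real_inner_self_eq_norm_sq, inner_eq]
  -- trace facts
  obtain ⟨hts, htn⟩ := frob_trace_facts S hS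
  have hNormG : ‖G‖ ^ 2 = (S * S).trace := by rw [norm_sq, hSsq]
  have hNG : ‖G‖ ^ 2 ≤ N ^ 2 := by rw [hNormG, hN]; exact hts
  have hN0 : 0 ≤ N := hN ▸ htn
  -- descent lemma applied to the update
  set X : Matrix (Fin m) (Fin n) ℝ := G * S⁻¹ with hX
  set y : Matrix (Fin m) (Fin n) ℝ := W - (γ * N) • X with hy
  have hdiff : y - W = -((γ * N) • X) := by rw [hy]; abel
  have hdescent := frob_descent_lemma f gradf L (le_of_lt hL) hgrad hlip W y
  have hinner : (inner ℝ (gradf W) (y - W) : ℝ) = -(γ * N * N) := by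
    rw [hdiff, inner_neg_right, real_inner_smul_right, ← hG, inner_eq, hX, hA, ← hN]
  have hnorm : ‖y - W‖ ^ 2 = (γ * N) ^ 2 * (n : ℝ) := by
    rw [hdiff, norm_neg, norm_smul, mul_pow, norm_sq, hB, trace_one]
    simp only [Real.norm_eq_abs, sq_abs, Fintype.card_fin]
  rw [hinner, hnorm] at hdescent
  -- positivity of the effective step factor
  have hc : 0 < 1 - L * γ / 2 * (n : ℝ) := by
    have h1 : γ * (L * (n : ℝ)) < 2 := by
      rw [lt_div_iff₀ (by positivity)] at hγ2
      linarith
    nlinarith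
  -- PL inequality
  have hpl := hPL W
  rw [← hG] at hpl
  have hfW : 0 ≤ f W - fstar := by linarith [hfstar W]
  have hN2 : 2 * μ * (f W - fstar) ≤ N ^ 2 := le_trans hpl hNG
  -- put it together
  have key : f y ≤ f W - γ * (1 - L * γ / 2 * (n : ℝ)) * N ^ 2 := by
    nlinarith [hdescent]
  nlinarith [mul_le_mul_of_nonneg_left hN2 (le_of_lt (mul_pos hγ1 hc))]


end
end
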